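/- Let k be a field and let F be the 4-dimensional k-vector space with basis {a, b, c, d}, with left coproduct Δ̃ given by Δ̃a = b⊗a + a⊗c, Δ̃b = b⊗b + a⊗d, Δ̃c = c⊗c + d⊗a, Δ̃d = c⊗d + d⊗b. Define the linear map D : F → F by D(a) = c − b, D(d) = b − c, D(b) = d − a, D(c) = a − d. Then D is a Leibniz coderivation with respect to Δ̃: Δ̃ ∘ D = (id ⊗ D) ∘ Δ̃ + (D ⊗ id) ∘ Δ̃. (The same map D is also a coderivation with respect to the right coproduct Δ of F given by Δa = a⊗a + b⊗c, Δb = a⊗b + b⊗d, Δc = d⊗c + c⊗a, Δd = d⊗d + c⊗b.) -/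

import Mathlib

open TensorProduct

noncomputable section

variable {k V : Type*} [Field k] [AddCommGroup V] [Module k V]

/-- `(Δ' ⊗ id) ∘ Δ` composed with the standard associator, as a map `V → V ⊗ (V ⊗ V)`. -/
def lcomp (Δ' Δ : V →ₗ[k] V ⊗[k] V) : V →ₗ[k] V ⊗[k] (V ⊗[k] V) :=
  (TensorProduct.assoc k V V V).toLinearMap ∘ₗ TensorProduct.map Δ' LinearMap.id ∘ₗ Δ

/-- `(id ⊗ Δ') ∘ Δ` as a map `V → V ⊗ (V ⊗ V)`. -/
def rcomp (Δ' Δ : V →ₗ[k] V ⊗[k] V) : V →ₗ[k] V ⊗[k] (V ⊗[k] V) :=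
  TensorProduct.map LinearMap.id Δ' ∘ₗ Δ

/-- Coassociativity of a coproduct: `(Δ ⊗ id) ∘ Δ = (id ⊗ Δ) ∘ Δ`. -/
def Coassoc (Δ : V →ₗ[k] V ⊗[k] V) : Prop := lcomp Δ Δ = rcomp Δ Δ

/-- `(D, Δ, Δ̃)` is a coassociative co-dialgebra: both coproducts are coassociative,
`(id ⊗ Δ) ∘ Δ = (id ⊗ Δ̃) ∘ Δ`, `(Δ̃ ⊗ id) ∘ Δ̃ = (Δ ⊗ id) ∘ Δ̃`, and the entanglement
equation `(Δ̃ ⊗ id) ∘ Δ = (id ⊗ Δ) ∘ Δ̃` holds. -/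
def CoDialgebra (Δ Δ' : V →ₗ[k] V ⊗[k] V) : Prop :=
  Coassoc Δ ∧ Coassoc Δ' ∧
  rcomp Δ Δ = rcomp Δ' Δ ∧
  lcomp Δ' Δ' = lcomp Δ Δ' ∧
  lcomp Δ' Δ = rcomp Δ Δ'

/-- On the 4-dimensional space `F` with basis `{a, b, c, d}`, the map `D`
with `D(a) = c − b`, `D(d) = b − c`, `D(b) = d − a`, `D(c) = a − d` is a Leibniz
coderivation with respect to the left coproduct `Δ̃` of `F`, and also with respect to
its right coproduct `Δ`. -/
theorem stmt19 (k F : Type*) [Field k] [AddCommGroup F] [Module k F]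
    (bs : Module.Basis (Fin 4) k F)
    (a b c d : F) (hab : a = bs 0) (hbb : b = bs 1) (hcb : c = bs 2) (hdb : d = bs 3)
    (Δ Δ' : F →ₗ[k] F ⊗[k] F)
    (hΔa : Δ a = a ⊗ₜ[k] a + b ⊗ₜ[k] c)
    (hΔb : Δ b = a ⊗ₜ[k] b + b ⊗ₜ[k] d)
    (hΔc : Δ c = d ⊗ₜ[k] c + c ⊗ₜ[k] a)
    (hΔd : Δ d = d ⊗ₜ[k] d + c ⊗ₜ[k] b)
    (hΔ'a : Δ' a = b ⊗ₜ[k] a + a ⊗ₜ[k] c)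
    (hΔ'b : Δ' b = b ⊗ₜ[k] b + a ⊗ₜ[k] d)
    (hΔ'c : Δ' c = c ⊗ₜ[k] c + d ⊗ₜ[k] a)
    (hΔ'd : Δ' d = c ⊗ₜ[k] d + d ⊗ₜ[k] b)
    (D : F →ₗ[k] F)
    (hDa : D a = c - b) (hDd : D d = b - c) (hDb : D b = d - a) (hDc : D c = a - d) :
    Δ' ∘ₗ D = TensorProduct.map LinearMap.id D ∘ₗ Δ' + TensorProduct.map D LinearMap.id ∘ₗ Δ' ∧
    Δ ∘ₗ D = TensorProduct.map LinearMap.id D ∘ₗ Δ + TensorProduct.map D LinearMap.id ∘ₗ Δ := by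
  subst hab hbb hcb hdb
  constructor <;> refine Module.Basis.ext bs fun i => ?_ <;> fin_cases i <;>
    simp only [Fin.isValue, Fin.reduceFinMk, LinearMap.comp_apply, LinearMap.add_apply, hDa, hDb, hDc, hDd,
      map_sub, map_add, TensorProduct.map_tmul, LinearMap.id_apply,
      hΔa, hΔb, hΔc, hΔd, hΔ'a, hΔ'b, hΔ'c, hΔ'd,
      TensorProduct.tmul_sub, TensorProduct.sub_tmul] <;> abel
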